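/- arXiv:0908.3305 — 2 statements merged into one kernel-verified Lean document; each statement's English description precedes it below -/
import Mathlib

section
/- If a graph G is determined by its domination polynomial (D-unique), then for every m ≥ 1 the join G ∨ K_m is also determined by its domination polynomial. -/
open Polynomial SimpleGraph

/-- `S` is a dominating set of `G`: every vertex is in `S` or adjacent to a vertex of `S`. -/
def IsDomSet {V : Type*} (G : SimpleGraph V) (S : Finset V) : Prop :=
  ∀ v : V, v ∈ S ∨ ∃ u ∈ S, G.Adj u v

/-- The domination polynomial `D(G,x) = ∑ d(G,i) xⁱ`. -/
noncomputable def domPoly {V : Type*} [Fintype V] (G : SimpleGraph V) : Polynomial ℤ :=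
  ∑ i ∈ Finset.range (Fintype.card V + 1),
    (Nat.card {S : Finset V // IsDomSet G S ∧ S.card = i} : ℤ) • (X : Polynomial ℤ) ^ i
/-- The join `G ∨ H`: disjoint union plus all edges between the two parts. -/
def joinGraph {α β : Type*} (G : SimpleGraph α) (H : SimpleGraph β) :
    SimpleGraph (α ⊕ β) :=
  (G ⊕g H) ⊔ SimpleGraph.fromRel (fun x y => x.isLeft ∧ y.isRight)

/-- `G` is determined by its domination polynomial. -/
def DUnique {V : Type} [Fintype V] (G : SimpleGraph V) : Prop :=
  ∀ (W : Type) [Fintype W], ∀ H : SimpleGraph W, domPoly H = domPoly G → Nonempty (H ≃g G)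

/-! ### Auxiliary definitions and lemmas -/

/-- The number of dominating sets of size `i`. -/
noncomputable def domCount {V : Type*} [Fintype V] (G : SimpleGraph V) (i : ℕ) : ℕ :=
  Nat.card {S : Finset V // IsDomSet G S ∧ S.card = i}

lemma domCount_eq_zero {V : Type*} [Fintype V] (G : SimpleGraph V) {k : ℕ}
    (h : Fintype.card V < k) : domCount G k = 0 := by
  rw [domCount, Nat.card_eq_zero]
  left
  rw [isEmpty_subtype]
  rintro S ⟨-, hS⟩
  exact absurd (S.card_le_univ.trans_eq (Finset.card_univ)) (by omega)

lemma coeff_domPoly {V : Type*} [Fintype V] (G : SimpleGraph V) (k : ℕ) :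
    (domPoly G).coeff k = if k ≤ Fintype.card V then (domCount G k : ℤ) else 0 := by
  classical
  rw [domPoly, Polynomial.finset_sum_coeff]
  have : ∀ i, ((Nat.card {S : Finset V // IsDomSet G S ∧ S.card = i} : ℤ) • (X : Polynomial ℤ) ^ i).coeff k
      = if i = k then (domCount G i : ℤ) else 0 := by
    intro i
    rw [zsmul_eq_mul, Polynomial.coeff_intCast_mul, Polynomial.coeff_X_pow]
    split_ifs <;> simp_all [domCount]
  simp only [this]
  rw [Finset.sum_ite_eq' (Finset.range (Fintype.card V + 1)) k]
  split_ifs with h1 h2 h3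
  · rfl
  · simp [Finset.mem_range, Nat.lt_succ_iff] at h1; omega
  · rw [Finset.mem_range, Nat.lt_succ_iff] at h1
    rw [domCount_eq_zero G (by omega)]; simp
  · rfl

lemma domCount_card {V : Type*} [Fintype V] (G : SimpleGraph V) :
    domCount G (Fintype.card V) = 1 := by
  rw [domCount, Nat.card_eq_one_iff_exists]
  refine ⟨⟨Finset.univ, fun v => Or.inl (Finset.mem_univ v), Finset.card_univ⟩, ?_⟩
  rintro ⟨S, -, hS⟩
  ext1
  exact Finset.eq_univ_of_card S (hS.trans Finset.card_univ.symm)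

lemma natDegree_domPoly {V : Type*} [Fintype V] (G : SimpleGraph V) :
    (domPoly G).natDegree = Fintype.card V := by
  apply Polynomial.natDegree_eq_of_le_of_coeff_ne_zero
  · rw [Polynomial.natDegree_le_iff_coeff_eq_zero]
    intro m hm
    rw [coeff_domPoly, if_neg (by omega)]
  · rw [coeff_domPoly, if_pos le_rfl, domCount_card]
    simp

lemma card_eq_of_domPoly_eq {V W : Type*} [Fintype V] [Fintype W]
    {G : SimpleGraph V} {H : SimpleGraph W} (h : domPoly H = domPoly G) :
    Fintype.card W = Fintype.card V := by
  rw [← natDegree_domPoly H, ← natDegree_domPoly G, h]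

lemma isDomSet_map {V W : Type*} {G : SimpleGraph V} {H : SimpleGraph W}
    (e : H ≃g G) {S : Finset W} (hS : IsDomSet H S) :
    IsDomSet G (S.map e.toEmbedding.toEmbedding) := by
  intro v
  rcases hS (e.symm v) with h | ⟨u, hu, hadj⟩
  · left
    simp only [Finset.mem_map, RelEmbedding.coe_toEmbedding, RelIso.coe_toRelEmbedding]
    exact ⟨e.symm v, h, e.apply_symm_apply v⟩
  · right
    refine ⟨e u, ?_, ?_⟩
    · simp only [Finset.mem_map, RelEmbedding.coe_toEmbedding, RelIso.coe_toRelEmbedding]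
      exact ⟨u, hu, rfl⟩
    · have := e.map_adj_iff.mpr hadj
      rwa [e.apply_symm_apply] at this

lemma domCount_eq_of_iso {V W : Type*} [Fintype V] [Fintype W]
    {G : SimpleGraph V} {H : SimpleGraph W} (e : H ≃g G) (i : ℕ) :
    domCount H i = domCount G i := by
  rw [domCount, domCount]
  apply Nat.card_eq_of_bijective (fun S =>
    ⟨S.1.map e.toEmbedding.toEmbedding, isDomSet_map e S.2.1,
      by rw [Finset.card_map]; exact S.2.2⟩)
  constructor
  · rintro ⟨S, hS⟩ ⟨T, hT⟩ hST
    simp only [Subtype.mk.injEq] at hST ⊢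
    exact Finset.map_injective _ hST
  · rintro ⟨S, hd, hc⟩
    refine ⟨⟨S.map e.symm.toEmbedding.toEmbedding, isDomSet_map e.symm hd,
      by rw [Finset.card_map]; exact hc⟩, ?_⟩
    simp only [Subtype.mk.injEq]
    rw [Finset.map_map]
    ext x
    simp

lemma domPoly_eq_of_iso {V W : Type*} [Fintype V] [Fintype W]
    {G : SimpleGraph V} {H : SimpleGraph W} (e : H ≃g G) :
    domPoly H = domPoly G := by
  have hc : Fintype.card W = Fintype.card V := Fintype.card_congr e.toEquiv
  rw [domPoly, domPoly, hc]
  apply Finset.sum_congr rfl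
  intro i _
  have := domCount_eq_of_iso e i
  rw [domCount, domCount] at this
  rw [this]

/-! ### Adjacency in joins -/

@[simp] lemma joinGraph_adj_inl_inl {α β : Type*} {G : SimpleGraph α} {H : SimpleGraph β}
    {a b : α} : (joinGraph G H).Adj (Sum.inl a) (Sum.inl b) ↔ G.Adj a b := by
  simp [joinGraph, fromRel_adj]

@[simp] lemma joinGraph_adj_inr_inr {α β : Type*} {G : SimpleGraph α} {H : SimpleGraph β}
    {a b : β} : (joinGraph G H).Adj (Sum.inr a) (Sum.inr b) ↔ H.Adj a b := by
  simp [joinGraph, fromRel_adj]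

@[simp] lemma joinGraph_adj_inl_inr {α β : Type*} {G : SimpleGraph α} {H : SimpleGraph β}
    {a : α} {b : β} : (joinGraph G H).Adj (Sum.inl a) (Sum.inr b) := by
  simp [joinGraph, fromRel_adj]

@[simp] lemma joinGraph_adj_inr_inl {α β : Type*} {G : SimpleGraph α} {H : SimpleGraph β}
    {a : β} {b : α} : (joinGraph G H).Adj (Sum.inr a) (Sum.inl b) := by
  simp [joinGraph, fromRel_adj]

/-! ### Counting dominating sets of a join with a complete graph -/

lemma natcard_split {γ : Type*} [Finite γ] (p q : γ → Prop) :
    Nat.card {x // p x} = Nat.card {x // p x ∧ q x} + Nat.card {x // p x ∧ ¬ q x} := by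
  classical
  rw [← Nat.card_sum]
  apply Nat.card_congr
  exact ((((Equiv.subtypeSubtypeEquivSubtypeInter p q).symm.sumCongr
    (Equiv.subtypeSubtypeEquivSubtypeInter p (fun x => ¬ q x)).symm).trans
    (Equiv.sumCompl fun (y : {x // p x}) => q y.1)).symm)

lemma exists_map_inl {α γ : Type*} {S : Finset (α ⊕ γ)} (h : ∀ b, Sum.inr b ∉ S) :
    ∃ S' : Finset α, S'.map ⟨Sum.inl, Sum.inl_injective⟩ = S := by
  classical
  refine ⟨S.preimage Sum.inl Sum.inl_injective.injOn, ?_⟩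
  ext x
  cases x with
  | inl a => simp [Finset.mem_preimage]
  | inr b => simp [h b]

lemma isDomSet_join_of_inr {α : Type*} {m : ℕ} {A : SimpleGraph α}
    {S : Finset (α ⊕ Fin m)} (h : ∃ b, Sum.inr b ∈ S) :
    IsDomSet (joinGraph A (completeGraph (Fin m))) S := by
  obtain ⟨b, hb⟩ := h
  intro v
  by_cases hv : v ∈ S
  · exact Or.inl hv
  · right
    cases v with
    | inl a => exact ⟨Sum.inr b, hb, joinGraph_adj_inr_inl⟩
    | inr c =>
      refine ⟨Sum.inr b, hb, joinGraph_adj_inr_inr.mpr ?_⟩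
      simp only [completeGraph_eq_top, top_adj]
      rintro rfl; exact hv hb

lemma isDomSet_join_map {α : Type*} {m : ℕ} {A : SimpleGraph α}
    {S : Finset α} (hne : S.Nonempty) :
    IsDomSet (joinGraph A (completeGraph (Fin m))) (S.map ⟨Sum.inl, Sum.inl_injective⟩)
      ↔ IsDomSet A S := by
  constructor
  · intro hd y
    rcases hd (Sum.inl y) with h | ⟨u, hu, hadj⟩
    · left; simpa using h
    · right
      simp only [Finset.mem_map, Function.Embedding.coeFn_mk] at hu
      obtain ⟨x, hx, rfl⟩ := hu
      exact ⟨x, hx, joinGraph_adj_inl_inl.mp hadj⟩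
  · intro hd v
    cases v with
    | inl y =>
      rcases hd y with h | ⟨u, hu, hadj⟩
      · left; simp [h]
      · exact Or.inr ⟨Sum.inl u, by simp [hu], joinGraph_adj_inl_inl.mpr hadj⟩
    | inr b =>
      obtain ⟨x, hx⟩ := hne
      exact Or.inr ⟨Sum.inl x, by simp [hx], joinGraph_adj_inl_inr⟩

lemma domCount_join {α : Type*} [Fintype α] (A : SimpleGraph α) (m k : ℕ) (hk : 1 ≤ k) :
    domCount (joinGraph A (completeGraph (Fin m))) k
      = ((Fintype.card α + m).choose k - (Fintype.card α).choose k) + domCount A k := by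
  classical
  set J := joinGraph A (completeGraph (Fin m)) with hJ
  set p : Finset (α ⊕ Fin m) → Prop := fun S => ∃ b, Sum.inr b ∈ S with hp
  have h1 : domCount J k
      = Nat.card {S // (IsDomSet J S ∧ S.card = k) ∧ p S}
        + Nat.card {S // (IsDomSet J S ∧ S.card = k) ∧ ¬ p S} :=
    natcard_split _ _
  have h2 : Nat.card {S // (IsDomSet J S ∧ S.card = k) ∧ p S}
      = Nat.card {S : Finset (α ⊕ Fin m) // S.card = k ∧ p S} := by
    apply Nat.card_congr
    apply Equiv.subtypeEquivRight
    intro S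
    exact ⟨fun h => ⟨h.1.2, h.2⟩, fun h => ⟨⟨isDomSet_join_of_inr h.2, h.1⟩, h.2⟩⟩
  have hcard : Nat.card {S : Finset (α ⊕ Fin m) // S.card = k} = (Fintype.card α + m).choose k := by
    rw [Nat.card_eq_fintype_card, Fintype.card_finset_len, Fintype.card_sum, Fintype.card_fin]
  have h3 : (Fintype.card α + m).choose k
      = Nat.card {S : Finset (α ⊕ Fin m) // S.card = k ∧ p S}
        + Nat.card {S : Finset (α ⊕ Fin m) // S.card = k ∧ ¬ p S} := by
    rw [← hcard]; exact natcard_split _ _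
  have h4 : Nat.card {S : Finset (α ⊕ Fin m) // S.card = k ∧ ¬ p S}
      = (Fintype.card α).choose k := by
    rw [← Fintype.card_finset_len (α := α) k, ← Nat.card_eq_fintype_card]
    symm
    apply Nat.card_eq_of_bijective (fun S => ⟨S.1.map ⟨Sum.inl, Sum.inl_injective⟩,
      by rw [Finset.card_map]; exact S.2, by simp [hp]⟩)
    constructor
    · rintro ⟨S, hS⟩ ⟨T, hT⟩ hST
      simp only [Subtype.mk.injEq] at hST ⊢
      exact Finset.map_injective _ hST
    · rintro ⟨S, hc, hnp⟩
      have : ∀ b, Sum.inr b ∉ S := by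
        intro b hb; exact hnp ⟨b, hb⟩
      obtain ⟨S', hS'⟩ := exists_map_inl this
      refine ⟨⟨S', ?_⟩, ?_⟩
      · rw [← hc, ← hS', Finset.card_map]
      · simp only [Subtype.mk.injEq]; exact hS'
  have h5 : Nat.card {S // (IsDomSet J S ∧ S.card = k) ∧ ¬ p S} = domCount A k := by
    rw [domCount]
    symm
    apply Nat.card_eq_of_bijective (fun S => ⟨S.1.map ⟨Sum.inl, Sum.inl_injective⟩,
      ⟨(isDomSet_join_map (Finset.card_pos.mp (by rw [S.2.2]; omega))).mpr S.2.1,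
        by rw [Finset.card_map]; exact S.2.2⟩, by simp [hp]⟩)
    constructor
    · rintro ⟨S, hS⟩ ⟨T, hT⟩ hST
      simp only [Subtype.mk.injEq] at hST ⊢
      exact Finset.map_injective _ hST
    · rintro ⟨S, ⟨hd, hc⟩, hnp⟩
      have : ∀ b, Sum.inr b ∉ S := by
        intro b hb; exact hnp ⟨b, hb⟩
      obtain ⟨S', hS'⟩ := exists_map_inl this
      have hc' : S'.card = k := by rw [← hc, ← hS', Finset.card_map]
      have hne : S'.Nonempty := Finset.card_pos.mp (by omega)
      refine ⟨⟨S', (isDomSet_join_map hne).mp (by rw [hS']; exact hd), hc'⟩, ?_⟩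
      simp only [Subtype.mk.injEq]; exact hS'
  have hmono : (Fintype.card α).choose k ≤ (Fintype.card α + m).choose k :=
    Nat.choose_le_choose k (by omega)
  omega

lemma domCount_zero {V : Type*} [Fintype V] (G : SimpleGraph V) :
    domCount G 0 = if Fintype.card V = 0 then 1 else 0 := by
  split_ifs with h
  · rw [domCount, Nat.card_eq_one_iff_exists]
    have : IsEmpty V := Fintype.card_eq_zero_iff.mp h
    refine ⟨⟨∅, fun v => (this.false v).elim, Finset.card_empty⟩, ?_⟩
    rintro ⟨S, -, hS⟩
    ext1
    exact Finset.card_eq_zero.mp hS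
  · rw [domCount, Nat.card_eq_zero]
    left
    rw [isEmpty_subtype]
    rintro S ⟨hd, hc⟩
    have : Nonempty V := Fintype.card_pos_iff.mp (by omega)
    obtain ⟨v⟩ := this
    rcases hd v with hv | ⟨u, hu, -⟩
    · rw [Finset.card_eq_zero.mp hc] at hv; exact absurd hv (Finset.notMem_empty v)
    · rw [Finset.card_eq_zero.mp hc] at hu; exact absurd hu (Finset.notMem_empty u)

lemma coeff_domPoly_join_sub {γ : Type*} [Fintype γ] (C : SimpleGraph γ)
    (m : ℕ) (hm : 1 ≤ m) (k : ℕ) :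
    (domPoly (joinGraph C (completeGraph (Fin m))) - domPoly C).coeff k
      = if k = 0 then -(if Fintype.card γ = 0 then 1 else 0)
        else ((Fintype.card γ + m).choose k : ℤ) - ((Fintype.card γ).choose k : ℤ) := by
  have hcs : Fintype.card (γ ⊕ Fin m) = Fintype.card γ + m := by
    rw [Fintype.card_sum, Fintype.card_fin]
  rw [Polynomial.coeff_sub, coeff_domPoly, coeff_domPoly, hcs]
  rcases Nat.eq_zero_or_pos k with rfl | hk
  · rw [if_pos (show (0:ℕ) ≤ Fintype.card γ + m by omega),
      if_pos (show (0:ℕ) ≤ Fintype.card γ by omega), if_pos rfl,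
      domCount_zero, domCount_zero, hcs,
      if_neg (show ¬(Fintype.card γ + m = 0) by omega)]
    split_ifs <;> simp
  · rw [if_neg (show ¬(k = 0) by omega)]
    have hmono : (Fintype.card γ).choose k ≤ (Fintype.card γ + m).choose k :=
      Nat.choose_le_choose k (by omega)
    by_cases h1 : k ≤ Fintype.card γ + m
    · rw [if_pos h1, domCount_join C m k hk]
      by_cases h2 : k ≤ Fintype.card γ
      · rw [if_pos h2]
        push_cast [Nat.cast_sub hmono]
        ring
      · rw [if_neg h2, domCount_eq_zero C (show Fintype.card γ < k by omega),
          Nat.choose_eq_zero_of_lt (show Fintype.card γ < k by omega)]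
        simp
    · rw [if_neg h1, if_neg (show ¬(k ≤ Fintype.card γ) by omega),
        Nat.choose_eq_zero_of_lt (show Fintype.card γ + m < k by omega),
        Nat.choose_eq_zero_of_lt (show Fintype.card γ < k by omega)]
      simp

lemma domPoly_join_sub {α β : Type*} [Fintype α] [Fintype β]
    (A : SimpleGraph α) (B : SimpleGraph β)
    (hab : Fintype.card α = Fintype.card β) (m : ℕ) (hm : 1 ≤ m) :
    domPoly (joinGraph A (completeGraph (Fin m))) - domPoly A
      = domPoly (joinGraph B (completeGraph (Fin m))) - domPoly B := by
  ext k
  rw [coeff_domPoly_join_sub A m hm k, coeff_domPoly_join_sub B m hm k, hab]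

/-! ### Universal vertices -/

open Classical in
/-- The set of universal vertices of a graph. -/
noncomputable def univSet {W : Type*} [Fintype W] (H : SimpleGraph W) : Finset W :=
  Finset.univ.filter (fun v => ∀ w, w ≠ v → H.Adj v w)

lemma mem_univSet {W : Type*} [Fintype W] {H : SimpleGraph W} {v : W} :
    v ∈ univSet H ↔ ∀ w, w ≠ v → H.Adj v w := by
  rw [univSet]
  simp

lemma domCount_one_le {W : Type*} [Fintype W] (H : SimpleGraph W) :
    domCount H 1 ≤ (univSet H).card := by
  classical
  have : (univSet H).card = Nat.card {v : W // ∀ w, w ≠ v → H.Adj v w} := by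
    rw [Nat.card_eq_fintype_card, Fintype.card_subtype]
    apply congrArg Finset.card
    ext v
    simp [mem_univSet]
  rw [this, domCount]
  apply Nat.card_le_card_of_injective
    (f := fun S => (⟨(Finset.card_eq_one.mp S.2.2).choose, by
      have ha := (Finset.card_eq_one.mp S.2.2).choose_spec
      intro w hw
      rcases S.2.1 w with h | ⟨u, hu, hadj⟩
      · rw [ha, Finset.mem_singleton] at h; exact absurd h hw
      · rw [ha, Finset.mem_singleton] at hu; rwa [hu] at hadj⟩ :
        {v : W // ∀ w, w ≠ v → H.Adj v w}))
  rintro ⟨S, hS⟩ ⟨R, hR⟩ h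
  simp only [Subtype.mk.injEq] at h ⊢
  rw [(Finset.card_eq_one.mp hS.2).choose_spec, (Finset.card_eq_one.mp hR.2).choose_spec, h]

lemma le_domCount_one_join {α : Type*} [Fintype α] (A : SimpleGraph α) (m : ℕ) :
    m ≤ domCount (joinGraph A (completeGraph (Fin m))) 1 := by
  rw [domCount]
  have hm' : m = Nat.card (Fin m) := by simp
  conv_lhs => rw [hm']
  apply Nat.card_le_card_of_injective
    (f := fun b => (⟨({Sum.inr b} : Finset (α ⊕ Fin m)),
      isDomSet_join_of_inr ⟨b, Finset.mem_singleton_self _⟩, Finset.card_singleton _⟩ :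
      {S : Finset (α ⊕ Fin m) // IsDomSet (joinGraph A (completeGraph (Fin m))) S ∧ S.card = 1}))
  intro b c h
  simp only [Subtype.mk.injEq, Finset.singleton_inj, Sum.inr.injEq] at h
  exact h

/-! ### Structure: splitting off universal vertices -/

noncomputable def isoJoinOfUniv {W : Type*} (H : SimpleGraph W) (T : Finset W)
    (hT : ∀ v ∈ T, ∀ w, w ≠ v → H.Adj v w) :
    H ≃g joinGraph (H.induce {w | w ∉ T}) (completeGraph (Fin T.card)) := by
  classical
  let e2 : Fin T.card ≃ {x // x ∈ T} := T.equivFin.symm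
  let f : ({w : W // w ∉ T} ⊕ Fin T.card) ≃ W :=
    (Equiv.sumCongr (Equiv.refl _) e2).trans
      ((Equiv.sumComm _ _).trans (Equiv.sumCompl (· ∈ T)))
  have hf : ∀ a b, H.Adj (f a) (f b) ↔
      (joinGraph (H.induce {w | w ∉ T}) (completeGraph (Fin T.card))).Adj a b := by
    rintro (x | b) (y | c)
    · simp only [f, Equiv.trans_apply, Equiv.sumCongr_apply, Sum.map_inl, Equiv.coe_refl,
        id_eq, Equiv.sumComm_apply, Sum.swap_inl, Equiv.sumCompl_apply_inr,
        joinGraph_adj_inl_inl, comap_adj, Function.Embedding.coe_subtype]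
    · simp only [f, Equiv.trans_apply, Equiv.sumCongr_apply, Sum.map_inl, Sum.map_inr,
        Equiv.coe_refl, id_eq, Equiv.sumComm_apply, Sum.swap_inl, Sum.swap_inr,
        Equiv.sumCompl_apply_inr, Equiv.sumCompl_apply_inl]
      have hu := hT (e2 c).1 (e2 c).2
      constructor
      · intro; exact joinGraph_adj_inl_inr
      · intro
        exact ((hu x.1 (fun h => x.2 (h ▸ (e2 c).2))).symm)
    · simp only [f, Equiv.trans_apply, Equiv.sumCongr_apply, Sum.map_inl, Sum.map_inr,
        Equiv.coe_refl, id_eq, Equiv.sumComm_apply, Sum.swap_inl, Sum.swap_inr,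
        Equiv.sumCompl_apply_inr, Equiv.sumCompl_apply_inl]
      have hu := hT (e2 b).1 (e2 b).2
      constructor
      · intro; exact joinGraph_adj_inr_inl
      · intro
        exact hu y.1 (fun h => y.2 (h ▸ (e2 b).2))
    · simp only [f, Equiv.trans_apply, Equiv.sumCongr_apply, Sum.map_inr, Equiv.coe_refl,
        id_eq, Equiv.sumComm_apply, Sum.swap_inr, Equiv.sumCompl_apply_inl,
        joinGraph_adj_inr_inr, completeGraph_eq_top, top_adj]
      constructor
      · intro h
        intro hbc
        exact H.loopless.irrefl _ (by rwa [hbc] at h)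
      · intro hbc
        have : (e2 b).1 ≠ (e2 c).1 := by
          intro h
          exact hbc (e2.injective (Subtype.ext h))
        exact hT (e2 b).1 (e2 b).2 (e2 c).1 (Ne.symm this)
  exact (⟨f, hf _ _⟩ : joinGraph (H.induce {w | w ∉ T}) (completeGraph (Fin T.card)) ≃g H).symm

def isoJoinCongr {α β γ : Type*} {A : SimpleGraph α} {B : SimpleGraph β}
    (C : SimpleGraph γ) (e : A ≃g B) :
    joinGraph A C ≃g joinGraph B C := by
  refine ⟨Equiv.sumCongr e.toEquiv (Equiv.refl _), ?_⟩
  rintro (x | b) (y | c) <;>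
    simp [joinGraph_adj_inl_inl, joinGraph_adj_inr_inr, joinGraph_adj_inl_inr,
      joinGraph_adj_inr_inl, e.map_adj_iff]

theorem dUnique_join_complete {V : Type} [Fintype V] (G : SimpleGraph V)
    (hG : DUnique G) (m : ℕ) (hm : 1 ≤ m) :
    DUnique (joinGraph G (completeGraph (Fin m))) := by
  intro W _ H hEq
  classical
  have hcs : Fintype.card (V ⊕ Fin m) = Fintype.card V + m := by
    rw [Fintype.card_sum, Fintype.card_fin]
  have hN : Fintype.card W = Fintype.card V + m :=
    (card_eq_of_domPoly_eq hEq).trans hcs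
  -- Step 1: H has at least m universal vertices
  have hc1 : domCount H 1 = domCount (joinGraph G (completeGraph (Fin m))) 1 := by
    have h := congrArg (fun p : Polynomial ℤ => p.coeff 1) hEq
    simp only [coeff_domPoly] at h
    rw [if_pos (show 1 ≤ Fintype.card W by omega),
      if_pos (show 1 ≤ Fintype.card (V ⊕ Fin m) by omega)] at h
    exact_mod_cast h
  have hmU : m ≤ (univSet H).card :=
    le_trans (le_trans (le_domCount_one_join G m) hc1.ge) (domCount_one_le H)
  obtain ⟨T, hTsub, hTcard⟩ := Finset.exists_subset_card_eq hmU
  have hT : ∀ v ∈ T, ∀ w, w ≠ v → H.Adj v w := fun v hv => mem_univSet.mp (hTsub hv)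
  -- Step 2: split H as H₀ ∨ K_m
  have e1 : H ≃g joinGraph (H.induce {w | w ∉ T}) (completeGraph (Fin m)) := by
    rw [← hTcard]
    exact isoJoinOfUniv H T hT
  have hcard0 : Fintype.card {w : W // w ∉ T} = Fintype.card V := by
    have h1 : Fintype.card {w : W // w ∉ T}
        = Fintype.card W - Fintype.card {w : W // w ∈ T} :=
      Fintype.card_subtype_compl _
    have h2 : Fintype.card {w : W // w ∈ T} = T.card := Fintype.card_coe T
    omega
  -- Step 3: conclude D(H₀) = D(G)
  have hpoly : domPoly (joinGraph (H.induce {w | w ∉ T}) (completeGraph (Fin m)))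
      = domPoly (joinGraph G (completeGraph (Fin m))) := by
    rw [← domPoly_eq_of_iso e1, hEq]
  have hsub := domPoly_join_sub (H.induce {w | w ∉ T}) G hcard0 m hm
  rw [hpoly] at hsub
  have h0 : domPoly (H.induce {w | w ∉ T}) = domPoly G := sub_right_injective hsub
  obtain ⟨e0⟩ := hG _ (H.induce {w | w ∉ T}) h0
  exact ⟨e1.trans (isoJoinCongr _ e0)⟩
end

section
/- There do not exist positive integers n_1 ≡ 0 (mod 4), n_2 ≡ 1 (mod 4), n_3 ≡ 3 (mod 4) with n = n_1 + n_2 + n_3 ≡ 0 (mod 4) such that D(C_n,x) = D(C_{n_1},x)·D(C_{n_2},x)·D(C_{n_3},x). -/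
open Polynomial SimpleGraph Finset

lemma domPoly_eq_sum_filter {V : Type*} [Fintype V] (G : SimpleGraph V)
    [DecidablePred fun S : Finset V => IsDomSet G S] :
    domPoly G = ∑ S ∈ Finset.univ.filter (fun S : Finset V => IsDomSet G S), X ^ S.card := by
  classical
  rw [domPoly]
  rw [← Finset.sum_fiberwise_of_maps_to (g := fun S : Finset V => S.card)
    (t := Finset.range (Fintype.card V + 1)) (fun S _ => by
      simp [Nat.lt_succ_iff, Finset.card_le_univ S])]
  refine Finset.sum_congr rfl fun i _ => ?_
  rw [Finset.filter_filter]
  rw [Finset.sum_congr rfl (fun S hS => by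
    simp only [Finset.mem_filter] at hS
    rw [hS.2.2])]
  rw [Finset.sum_const, Nat.card_eq_fintype_card, Fintype.card_subtype]
  simp [zsmul_eq_mul, nsmul_eq_mul]

lemma isDomSet_cycle_iff (m : ℕ) (S : Finset (Fin (m + 1))) :
    IsDomSet (cycleGraph (m + 1)) S ↔ ∀ v, v ∈ S ∨ v + 1 ∈ S ∨ v - 1 ∈ S := by
  match m with
  | 0 =>
    have he : ∀ v w : Fin 1, v = w := fun v w => Subsingleton.elim v w
    constructor
    · intro h v
      rcases h v with h | ⟨u, hu, hadj⟩
      · exact Or.inl h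
      · exact absurd hadj (cycleGraph_one_adj)
    · intro h v
      rcases h v with h | h | h
      · exact Or.inl h
      · exact Or.inl (by rwa [he (v+1) v] at h)
      · exact Or.inl (by rwa [he (v-1) v] at h)
  | m + 1 =>
    unfold IsDomSet
    refine forall_congr' fun v => or_congr_right ?_
    constructor
    · rintro ⟨u, hu, hadj⟩
      rw [cycleGraph_adj] at hadj
      rcases hadj with h | h
      · left
        have : u = v + 1 := (eq_add_of_sub_eq h).trans (add_comm 1 v)
        rwa [← this]
      · right
        have : u = v - 1 := by
          have h2 : u + 1 = v := (add_comm u 1).trans (eq_add_of_sub_eq h).symm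
          exact eq_sub_of_add_eq h2
        rwa [← this]
    · rintro (h | h)
      · exact ⟨v + 1, h, by rw [cycleGraph_adj]; left; exact add_sub_cancel_left v 1⟩
      · exact ⟨v - 1, h, by rw [cycleGraph_adj]; right; exact sub_sub_cancel v 1⟩

noncomputable def Amat : Matrix (Fin 3) (Fin 3) (Polynomial ℤ) :=
  !![X, 1, 0; X, 0, 1; X, 0, 0]

lemma Amat_zero (s : Fin 3) : Amat s 0 = X := by
  fin_cases s <;> simp [Amat, Matrix.vecHead, Matrix.vecTail]

lemma Amat_eq (s t : Fin 3) :
    Amat s t = if t = 0 then X else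
      if (s = 0 ∧ t = 1) ∨ (s = 1 ∧ t = 2) then 1 else 0 := by
  fin_cases s <;> fin_cases t <;> simp [Amat, Matrix.vecHead, Matrix.vecTail]

/-- weight of a path `g : Fin (n+1) → Fin 3` -/
noncomputable def pathSum (n : ℕ) (g : Fin (n + 1) → Fin 3) : Polynomial ℤ :=
  ∏ i : Fin n, Amat (g i.castSucc) (g i.succ)

lemma pathSum_cons (n : ℕ) (a : Fin 3) (h : Fin (n + 1) → Fin 3) :
    pathSum (n + 1) (Fin.cons a h) = Amat a (h 0) * pathSum n h := by
  rw [pathSum, Fin.prod_univ_succ, pathSum]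
  have h0 : (Fin.cons a h : Fin (n+2) → Fin 3) ((0 : Fin (n+1)).castSucc) = a := rfl
  have h1 : (Fin.cons a h : Fin (n+2) → Fin 3) ((0 : Fin (n+1)).succ) = h 0 :=
    Fin.cons_succ (α := fun _ : Fin (n+2) => Fin 3) a h 0
  rw [h0, h1]
  congr 1

lemma pow_apply_eq (n : ℕ) (a b : Fin 3) :
    (Amat ^ n) a b = ∑ g : Fin (n + 1) → Fin 3,
      if g 0 = a ∧ g (Fin.last n) = b then pathSum n g else 0 := by
  induction n generalizing a b with
  | zero =>
    rw [← Equiv.sum_comp (Equiv.funUnique (Fin 1) (Fin 3)).symm]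
    simp only [pathSum, Finset.univ_eq_empty, Finset.prod_empty,
      Equiv.funUnique_symm_apply, Function.const]
    rw [pow_zero, Matrix.one_apply, Fin.sum_univ_three]
    fin_cases a <;> fin_cases b <;> simp
  | succ n ih =>
    rw [pow_succ', Matrix.mul_apply]
    have step1 : ∀ c, Amat a c * (Amat ^ n) c b
        = ∑ h : Fin (n + 1) → Fin 3,
            if h 0 = c ∧ h (Fin.last n) = b then Amat a c * pathSum n h else 0 := by
      intro c
      rw [ih c b, Finset.mul_sum]
      exact Finset.sum_congr rfl fun h _ => by rw [mul_ite, mul_zero]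
    simp only [step1]
    rw [Finset.sum_comm]
    have step2 : ∀ h : Fin (n + 1) → Fin 3,
        (∑ c : Fin 3, if h 0 = c ∧ h (Fin.last n) = b then Amat a c * pathSum n h else 0)
        = if h (Fin.last n) = b then Amat a (h 0) * pathSum n h else 0 := by
      intro h
      simp only [ite_and]
      rw [Finset.sum_ite_eq]
      simp
    simp only [step2]
    rw [← Equiv.sum_comp (Fin.consEquiv (fun _ : Fin (n + 2) => Fin 3)),
      Fintype.sum_prod_type]
    symm
    have hce : ∀ (x : Fin 3) (h : Fin (n + 1) → Fin 3),
        (Fin.consEquiv (fun _ : Fin (n + 2) => Fin 3)) (x, h) = Fin.cons x h :=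
      fun _ _ => rfl
    have hlast : ∀ (x : Fin 3) (h : Fin (n + 1) → Fin 3),
        (Fin.cons x h : Fin (n + 2) → Fin 3) (Fin.last (n + 1)) = h (Fin.last n) := by
      intro x h
      rw [← Fin.succ_last]
      exact Fin.cons_succ (α := fun _ : Fin (n+2) => Fin 3) x h (Fin.last n)
    simp only [hce, Fin.cons_zero, hlast, pathSum_cons]
    rw [Finset.sum_comm]
    refine Finset.sum_congr rfl fun h _ => ?_
    simp only [ite_and]
    rw [Fintype.sum_ite_eq' a
      (fun x => if h (Fin.last n) = b then Amat x (h 0) * pathSum n h else 0)]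

lemma trace_pow_eq (n : ℕ) :
    (Amat ^ n).trace = ∑ g : Fin (n + 1) → Fin 3,
      if g 0 = g (Fin.last n) then pathSum n g else 0 := by
  rw [Matrix.trace]
  simp only [Matrix.diag, pow_apply_eq]
  rw [Finset.sum_comm]
  refine Finset.sum_congr rfl fun g _ => ?_
  simp only [ite_and]
  rw [Fintype.sum_ite_eq (g 0) (fun a => if g (Fin.last n) = a then pathSum n g else 0)]
  simp [eq_comm]

lemma succ_eq_castSucc_add_one (m : ℕ) (i : Fin (m + 1)) (hi : i ≠ Fin.last m) :
    i.succ = ((i + 1 : Fin (m + 1))).castSucc := by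
  apply Fin.ext
  simp [Fin.val_add_one, hi]

lemma last_add_one_eq_zero (m : ℕ) : (Fin.last m) + 1 = (0 : Fin (m + 1)) := by
  apply Fin.ext
  simp [Fin.add_def]

lemma snoc_zero' {m : ℕ} (f : Fin (m + 1) → Fin 3) (x : Fin 3) :
    (Fin.snoc f x : Fin (m + 2) → Fin 3) 0 = f 0 := by
  have h : (0 : Fin (m + 2)) = (0 : Fin (m + 1)).castSucc := rfl
  rw [h, Fin.snoc_castSucc]

lemma trace_pow_cyc (m : ℕ) :
    (Amat ^ (m + 1)).trace
      = ∑ f : Fin (m + 1) → Fin 3, ∏ i : Fin (m + 1), Amat (f i) (f (i + 1)) := by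
  classical
  rw [trace_pow_eq, ← Finset.sum_filter]
  refine Finset.sum_nbij' (i := fun g => g ∘ Fin.castSucc)
    (j := fun f => (Fin.snoc f (f 0) : Fin (m + 2) → Fin 3)) ?_ ?_ ?_ ?_ ?_
  · intro g _
    exact Finset.mem_univ _
  · intro f _
    rw [Finset.mem_filter]
    refine ⟨Finset.mem_univ _, ?_⟩
    show (Fin.snoc f (f 0) : Fin (m + 2) → Fin 3) 0
      = (Fin.snoc f (f 0) : Fin (m + 2) → Fin 3) (Fin.last (m + 1))
    rw [snoc_zero', Fin.snoc_last]
  · intro g hg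
    rw [Finset.mem_filter] at hg
    show (Fin.snoc (g ∘ Fin.castSucc) ((g ∘ Fin.castSucc) 0) : Fin (m + 2) → Fin 3) = g
    funext j
    refine Fin.lastCases ?_ ?_ j
    · rw [Fin.snoc_last]
      exact (show (g ∘ Fin.castSucc) 0 = g 0 from rfl).trans hg.2
    · intro i
      rw [Fin.snoc_castSucc]
      rfl
  · intro f _
    show (Fin.snoc f (f 0) : Fin (m + 2) → Fin 3) ∘ Fin.castSucc = f
    funext i
    show (Fin.snoc f (f 0) : Fin (m + 2) → Fin 3) i.castSucc = f i
    rw [Fin.snoc_castSucc]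
  · intro g hg
    rw [Finset.mem_filter] at hg
    rw [pathSum]
    refine Finset.prod_congr rfl fun i _ => ?_
    show Amat (g i.castSucc) (g i.succ)
      = Amat ((g ∘ Fin.castSucc) i) ((g ∘ Fin.castSucc) (i + 1))
    congr 1
    by_cases hi : i = Fin.last m
    · subst hi
      rw [Fin.succ_last, Function.comp_apply, last_add_one_eq_zero]
      rw [Fin.castSucc_zero]
      exact hg.2.symm
    · rw [succ_eq_castSucc_add_one m i hi]
      rfl

def ValidF {m : ℕ} (f : Fin (m + 1) → Fin 3) : Prop :=
  ∀ i, f (i + 1) = 0 ∨ (f i = 0 ∧ f (i + 1) = 1) ∨ (f i = 1 ∧ f (i + 1) = 2)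

def fOf {m : ℕ} (S : Finset (Fin (m + 1))) : Fin (m + 1) → Fin 3 :=
  fun i => if i - 1 ∈ S then 0 else if i - 2 ∈ S then 1 else 2

lemma fOf_apply {m : ℕ} (S : Finset (Fin (m + 1))) (i : Fin (m + 1)) :
    fOf S i = if i - 1 ∈ S then 0 else if i - 2 ∈ S then 1 else 2 := rfl

lemma prod_eq_zero_of_not_valid {m : ℕ} (f : Fin (m + 1) → Fin 3) (hf : ¬ ValidF f) :
    ∏ i : Fin (m + 1), Amat (f i) (f (i + 1)) = 0 := by
  rw [ValidF] at hf
  push_neg at hf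
  obtain ⟨i, h1, h2, h3⟩ := hf
  refine Finset.prod_eq_zero (Finset.mem_univ i) ?_
  rw [Amat_eq, if_neg h1, if_neg]
  rintro (⟨ha, hb⟩ | ⟨ha, hb⟩)
  · exact h2 ha hb
  · exact h3 ha hb

lemma prod_eq_pow_of_valid {m : ℕ} (f : Fin (m + 1) → Fin 3) (hf : ValidF f) :
    ∏ i : Fin (m + 1), Amat (f i) (f (i + 1))
      = X ^ (Finset.univ.filter (fun j : Fin (m + 1) => f (j + 1) = 0)).card := by
  classical
  have key : ∀ i : Fin (m + 1), Amat (f i) (f (i + 1)) = if f (i + 1) = 0 then X else 1 := by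
    intro i
    by_cases h : f (i + 1) = 0
    · rw [if_pos h, h, Amat_zero]
    · rw [if_neg h, Amat_eq, if_neg h, if_pos]
      rcases hf i with h1 | h2 | h3
      · exact absurd h1 h
      · exact Or.inl h2
      · exact Or.inr h3
  rw [Finset.prod_congr rfl (fun i _ => key i), Finset.prod_ite, Finset.prod_const,
    Finset.prod_const_one, mul_one]

lemma valid_fOf {m : ℕ} (S : Finset (Fin (m + 1)))
    (hS : ∀ v : Fin (m + 1), v ∈ S ∨ v + 1 ∈ S ∨ v - 1 ∈ S) : ValidF (fOf S) := by
  intro i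
  rw [fOf_apply S i, fOf_apply S (i + 1),
    show i + 1 - 1 = i by open Fin.CommRing in ring, show i + 1 - 2 = i - 1 by open Fin.CommRing in ring]
  by_cases h1 : i ∈ S
  · exact Or.inl (by rw [if_pos h1])
  · by_cases h2 : i - 1 ∈ S
    · exact Or.inr (Or.inl ⟨by rw [if_pos h2], by rw [if_neg h1, if_pos h2]⟩)
    · have h3 : i - 2 ∈ S := by
        rcases hS (i - 1) with h | h | h
        · exact absurd h h2
        · rw [show i - 1 + 1 = i by open Fin.CommRing in ring] at h
          exact absurd h h1
        · rwa [show i - 1 - 1 = i - 2 by open Fin.CommRing in ring] at h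
      exact Or.inr (Or.inr ⟨by rw [if_neg h2, if_pos h3], by rw [if_neg h1, if_neg h2]⟩)

lemma cycSum_eq_domSum (m : ℕ)
    [DecidablePred fun S : Finset (Fin (m + 1)) => ∀ v, v ∈ S ∨ v + 1 ∈ S ∨ v - 1 ∈ S] :
    (∑ f : Fin (m + 1) → Fin 3, ∏ i : Fin (m + 1), Amat (f i) (f (i + 1)))
      = ∑ S ∈ Finset.univ.filter
          (fun S : Finset (Fin (m + 1)) => ∀ v, v ∈ S ∨ v + 1 ∈ S ∨ v - 1 ∈ S),
          X ^ S.card := by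
  classical
  rw [← Finset.sum_filter_of_ne (p := fun f : Fin (m + 1) → Fin 3 => ValidF f)
    (fun f _ hne => by
      by_contra hv
      exact hne (prod_eq_zero_of_not_valid f hv))]
  refine Finset.sum_nbij'
    (i := fun f => Finset.univ.filter (fun j : Fin (m + 1) => f (j + 1) = 0))
    (j := fun S => fOf S) ?_ ?_ ?_ ?_ ?_
  · -- maps to window filter
    intro f hf
    rw [Finset.mem_filter] at hf ⊢
    refine ⟨Finset.mem_univ _, ?_⟩
    intro v
    simp only [Finset.mem_filter, Finset.mem_univ, true_and]
    rw [show v - 1 + 1 = v by open Fin.CommRing in ring]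
    by_contra hc
    push_neg at hc
    obtain ⟨c1, c2, c3⟩ := hc
    rcases hf.2 v with h1 | h2 | h3
    · exact c1 h1
    · exact c3 h2.1
    · rcases hf.2 (v + 1) with h1' | h2' | h3'
      · exact c2 h1'
      · rw [h3.2] at h2'
        exact absurd h2'.1 (by decide)
      · rw [h3.2] at h3'
        exact absurd h3'.1 (by decide)
  · -- fOf S is valid
    intro S hS
    rw [Finset.mem_filter] at hS
    rw [Finset.mem_filter]
    exact ⟨Finset.mem_univ _, valid_fOf S hS.2⟩
  · -- left inverse : fOf (S_f) = f
    intro f hf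
    rw [Finset.mem_filter] at hf
    funext i
    show fOf (Finset.univ.filter (fun j : Fin (m + 1) => f (j + 1) = 0)) i = f i
    rw [fOf_apply]
    simp only [Finset.mem_filter, Finset.mem_univ, true_and]
    rw [show i - 1 + 1 = i by open Fin.CommRing in ring, show i - 2 + 1 = i - 1 by open Fin.CommRing in ring]
    rcases hf.2 (i - 1) with h | h | h <;> rw [show i - 1 + 1 = i by open Fin.CommRing in ring] at h
    · rw [if_pos h, h]
    · rw [if_neg (by rw [h.2]; decide), if_pos h.1, h.2]
    · rw [if_neg (by rw [h.2]; decide), if_neg (by rw [h.1]; decide), h.2]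
  · -- right inverse : S_(fOf S) = S
    intro S hS
    show Finset.univ.filter (fun j : Fin (m + 1) => fOf S (j + 1) = 0) = S
    ext j
    simp only [Finset.mem_filter, Finset.mem_univ, true_and]
    rw [fOf_apply, show j + 1 - 1 = j by open Fin.CommRing in ring, show j + 1 - 2 = j - 1 by open Fin.CommRing in ring]
    constructor
    · intro h
      by_cases hj : j ∈ S
      · exact hj
      · rw [if_neg hj] at h
        by_cases hj2 : j - 1 ∈ S
        · rw [if_pos hj2] at h; exact absurd h (by decide)
        · rw [if_neg hj2] at h; exact absurd h (by decide)
    · intro h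
      rw [if_pos h]
  · -- values
    intro f hf
    rw [Finset.mem_filter] at hf
    exact prod_eq_pow_of_valid f hf.2

lemma domPoly_cycle (m : ℕ) : domPoly (cycleGraph (m + 1)) = (Amat ^ (m + 1)).trace := by
  classical
  rw [domPoly_eq_sum_filter, trace_pow_cyc, cycSum_eq_domSum]
  congr 1
  apply Finset.filter_congr
  intro S _
  exact isDomSet_cycle_iff m S

noncomputable def tp (k : ℕ) : Polynomial ℤ := (Amat ^ k).trace

lemma domPoly_cycle' (k : ℕ) (hk : k ≠ 0) : domPoly (cycleGraph k) = tp k := by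
  obtain ⟨m, rfl⟩ := Nat.exists_eq_succ_of_ne_zero hk
  exact domPoly_cycle m

lemma hCH : Amat ^ 3 = (X : Polynomial ℤ) • Amat ^ 2 + (X : Polynomial ℤ) • Amat + (X : Polynomial ℤ) • (1 : Matrix (Fin 3) (Fin 3) (Polynomial ℤ)) := by
  ext i j
  fin_cases i <;> fin_cases j <;>
    simp [Amat, pow_succ, Matrix.mul_apply, Fin.sum_univ_three, Matrix.one_apply,
      Matrix.vecHead, Matrix.vecTail] <;> ring

lemma tp_rec (k : ℕ) : tp (k + 3) = X * (tp (k + 2) + tp (k + 1) + tp k) := by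
  have h : Amat ^ (k + 3) = (X : Polynomial ℤ) • Amat ^ (k + 2) + (X : Polynomial ℤ) • Amat ^ (k + 1) + (X : Polynomial ℤ) • Amat ^ k := by
    rw [pow_add, hCH, mul_add, mul_add, Matrix.mul_smul, Matrix.mul_smul, Matrix.mul_smul,
      mul_one, ← pow_add, ← pow_succ]
  rw [tp, h, Matrix.trace_add, Matrix.trace_add, Matrix.trace_smul, Matrix.trace_smul,
    Matrix.trace_smul]
  rw [tp, tp, tp]
  simp only [smul_eq_mul]
  ring

lemma tp0 : tp 0 = 3 := by
  rw [tp, pow_zero]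
  simp [Matrix.trace, Matrix.one_apply, Fin.sum_univ_three]
  try ring

lemma tp1 : tp 1 = X := by
  rw [tp, pow_one, Matrix.trace_fin_three]
  simp [Amat, Matrix.vecHead, Matrix.vecTail]

lemma tp2 : tp 2 = X ^ 2 + 2 * X := by
  rw [tp, pow_two, Matrix.trace_fin_three]
  simp [Amat, Matrix.mul_apply, Fin.sum_univ_three, Matrix.vecHead, Matrix.vecTail]
  try ring

noncomputable def av (k : ℕ) : ℤ := (tp k).eval (-1)
noncomputable def bv (k : ℕ) : ℤ := ((tp k).derivative).eval (-1)

lemma av_rec (k : ℕ) : av (k + 3) = -(av (k + 2) + av (k + 1) + av k) := by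
  rw [av, tp_rec]
  simp [av]
  try ring

lemma bv_rec (k : ℕ) :
    bv (k + 3) = (av (k + 2) + av (k + 1) + av k) - (bv (k + 2) + bv (k + 1) + bv k) := by
  rw [bv, tp_rec, Polynomial.derivative_mul]
  simp [av, bv]
  try ring

def avF (k : ℕ) : ℤ := if k % 4 = 0 then 3 else -1
def bvF (k : ℕ) : ℤ := if k % 4 = 0 then -(k : ℤ) else if k % 4 = 1 then (k : ℤ) else 0

lemma av_bv_eq : ∀ k, av k = avF k ∧ bv k = bvF k := by
  have base0 : av 0 = 3 ∧ bv 0 = 0 := by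
    constructor
    · rw [av, tp0]; simp
    · rw [bv, tp0]; simp
  have base1 : av 1 = -1 ∧ bv 1 = 1 := by
    constructor
    · rw [av, tp1]; simp
    · rw [bv, tp1]; simp
  have base2 : av 2 = -1 ∧ bv 2 = 0 := by
    constructor
    · rw [av, tp2]; simp; try ring
    · rw [bv, tp2]; simp
  suffices h : ∀ k, (av k = avF k ∧ bv k = bvF k) ∧ (av (k+1) = avF (k+1) ∧ bv (k+1) = bvF (k+1))
      ∧ (av (k+2) = avF (k+2) ∧ bv (k+2) = bvF (k+2)) from fun k => (h k).1
  intro k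
  induction k with
  | zero =>
    refine ⟨⟨base0.1.trans ?_, base0.2.trans ?_⟩, ⟨base1.1.trans ?_, base1.2.trans ?_⟩,
      ⟨base2.1.trans ?_, base2.2.trans ?_⟩⟩ <;> simp [avF, bvF]
  | succ k ih =>
    obtain ⟨h0, h1, h2⟩ := ih
    refine ⟨h1, h2, ?_, ?_⟩
    · rw [av_rec, h0.1, h1.1, h2.1]
      have hr : k % 4 = 0 ∨ k % 4 = 1 ∨ k % 4 = 2 ∨ k % 4 = 3 := by omega
      rcases hr with hk | hk | hk | hk <;>
        · have e1 : (k+1) % 4 = (k % 4 + 1) % 4 := by omega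
          have e2 : (k+2) % 4 = (k % 4 + 2) % 4 := by omega
          have e3 : (k+3) % 4 = (k % 4 + 3) % 4 := by omega
          simp [avF, hk, e1, e2, e3]
    · rw [bv_rec, h0.1, h1.1, h2.1, h0.2, h1.2, h2.2]
      have hr : k % 4 = 0 ∨ k % 4 = 1 ∨ k % 4 = 2 ∨ k % 4 = 3 := by omega
      rcases hr with hk | hk | hk | hk <;>
        · have e1 : (k+1) % 4 = (k % 4 + 1) % 4 := by omega
          have e2 : (k+2) % 4 = (k % 4 + 2) % 4 := by omega
          have e3 : (k+3) % 4 = (k % 4 + 3) % 4 := by omega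
          simp [avF, bvF, hk, e1, e2, e3]
          try push_cast
          try ring

theorem no_three_cycle_factorization_case_one (n n₁ n₂ n₃ : ℕ)
    (h₁ : 0 < n₁) (h₂ : 0 < n₂) (h₃ : 0 < n₃) (hsum : n = n₁ + n₂ + n₃)
    (hn : n % 4 = 0) (hn₁ : n₁ % 4 = 0) (hn₂ : n₂ % 4 = 1) (hn₃ : n₃ % 4 = 3) :
    domPoly (cycleGraph n) ≠
      domPoly (cycleGraph n₁) * domPoly (cycleGraph n₂) * domPoly (cycleGraph n₃) := by
  intro heq
  have hn0 : n ≠ 0 := by omega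
  have E : tp n = tp n₁ * tp n₂ * tp n₃ := by
    rw [← domPoly_cycle' n hn0, ← domPoly_cycle' n₁ (by omega), ← domPoly_cycle' n₂ (by omega),
      ← domPoly_cycle' n₃ (by omega)]
    exact heq
  have Eb : bv n = bv n₁ * av n₂ * av n₃ + av n₁ * bv n₂ * av n₃ + av n₁ * av n₂ * bv n₃ := by
    rw [bv, E, Polynomial.derivative_mul, Polynomial.derivative_mul]
    simp [av, bv]
    try ring
  rw [(av_bv_eq n).2, (av_bv_eq n₁).2, (av_bv_eq n₂).2, (av_bv_eq n₃).2,
    (av_bv_eq n₁).1, (av_bv_eq n₂).1, (av_bv_eq n₃).1] at Eb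
  simp only [avF, bvF, hn, hn₁, hn₂, hn₃] at Eb
  norm_num at Eb
  omega
end
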